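/- Every nilpotent, torsion-free, non-abelian subgroup of GL_n(ℂ) contains a non-diagonalizable element. -/

import Mathlib

open Matrix

/-- `M` is diagonalizable over `ℂ` if it is conjugate to a diagonal matrix. -/
def IsDiagonalizable {n : ℕ} (M : Matrix (Fin n) (Fin n) ℂ) : Prop :=
  ∃ P : GL (Fin n) ℂ, (((P : Matrix (Fin n) (Fin n) ℂ) * M * (↑P⁻¹ : Matrix (Fin n) (Fin n) ℂ))).IsDiag

/-- Torsion-free monoid, as `Monoid.IsTorsionFree` was defined in older Mathlib. -/
def Monoid.IsTorsionFree (G : Type*) [Monoid G] : Prop :=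
  ∀ g : G, g ≠ 1 → ¬IsOfFinOrder g

lemma key_pow_eq_one {n : ℕ} (A B C : GL (Fin n) ℂ)
    (hAB : ∀ k : ℕ, A ^ k * B = C ^ k * B * A ^ k)
    (hCB : Commute C B)
    (hC : IsDiagonalizable (C : Matrix (Fin n) (Fin n) ℂ)) :
    ∃ N : ℕ, 0 < N ∧ C ^ N = 1 := by
  classical
  obtain ⟨P, hP⟩ := hC
  set E : GL (Fin n) ℂ := P * C * P⁻¹ with hE
  set D : Matrix (Fin n) (Fin n) ℂ := (E : Matrix (Fin n) (Fin n) ℂ) with hDdef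
  have hDE : ((P : Matrix (Fin n) (Fin n) ℂ) * (C : Matrix (Fin n) (Fin n) ℂ)
      * (↑P⁻¹ : Matrix (Fin n) (Fin n) ℂ)) = D := by
    rw [hDdef, hE]; simp [Units.val_mul]
  rw [hDE] at hP
  have hCE : C = P⁻¹ * E * P := by rw [hE]; group
  -- linear maps
  set φ : Matrix (Fin n) (Fin n) ℂ ≃ₐ[ℂ] Module.End ℂ (Fin n → ℂ) :=
    Matrix.toLinAlgEquiv' with hφ
  set f : Module.End ℂ (Fin n → ℂ) := φ (C : Matrix (Fin n) (Fin n) ℂ) with hf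
  set g : Module.End ℂ (Fin n → ℂ) := φ (B : Matrix (Fin n) (Fin n) ℂ) with hg
  have hcoe : ∀ U V : GL (Fin n) ℂ, ((U * V : GL (Fin n) ℂ) : Matrix (Fin n) (Fin n) ℂ)
      = (U : Matrix (Fin n) (Fin n) ℂ) * (V : Matrix (Fin n) (Fin n) ℂ) := fun _ _ => rfl
  have hPP : (P : Matrix (Fin n) (Fin n) ℂ) * (↑P⁻¹ : Matrix (Fin n) (Fin n) ℂ) = 1 := by
    rw [← hcoe, mul_inv_cancel]; rfl
  have hfg : Commute f g := by
    have h1 : C * B = B * C := hCB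
    have h2 := congrArg (fun (U : GL (Fin n) ℂ) => φ (U : Matrix (Fin n) (Fin n) ℂ)) h1
    simp [hcoe, _root_.map_mul] at h2
    exact h2
  have hinj : ∀ (U : GL (Fin n) ℂ) (v : Fin n → ℂ),
      φ (U : Matrix (Fin n) (Fin n) ℂ) v = 0 → v = 0 := by
    intro U v hv
    have h1 : φ ((↑U⁻¹ : Matrix (Fin n) (Fin n) ℂ) * (U : Matrix (Fin n) (Fin n) ℂ)) v = 0 := by
      rw [_root_.map_mul]
      change φ _ (φ _ v) = 0
      rw [hv, map_zero]
    rw [← hcoe, inv_mul_cancel] at h1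
    simpa using h1
  -- each diagonal entry of D is a root of unity
  have hroot : ∀ i : Fin n, ∃ m : ℕ, 0 < m ∧ (D i i) ^ m = 1 := by
    intro i
    set γ : ℂ := D i i with hγ
    -- eigenvector of f with eigenvalue γ
    set v : Fin n → ℂ := (↑P⁻¹ : Matrix (Fin n) (Fin n) ℂ) *ᵥ Pi.single i 1 with hv
    have hvne : v ≠ 0 := by
      intro h0
      have h1 : (P : Matrix (Fin n) (Fin n) ℂ) *ᵥ v = Pi.single i 1 := by
        rw [hv, Matrix.mulVec_mulVec, ← hcoe, mul_inv_cancel]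
        exact Matrix.one_mulVec _
      rw [h0, Matrix.mulVec_zero] at h1
      have := congrFun h1.symm i
      simp at this
    have hDsingle : D *ᵥ (Pi.single i 1 : Fin n → ℂ) = γ • (Pi.single i 1 : Fin n → ℂ) := by
      rw [← hP.diagonal_diag, Matrix.diagonal_mulVec_single]
      ext j
      simp [Pi.single_apply, Matrix.diag, hγ]
    have hfv : f v = γ • v := by
      have hCmat : (C : Matrix (Fin n) (Fin n) ℂ)
          = (↑P⁻¹ : Matrix (Fin n) (Fin n) ℂ) * D * (P : Matrix (Fin n) (Fin n) ℂ) := by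
        rw [hCE]; simp [hcoe]; rfl
      rw [hf, Matrix.toLinAlgEquiv'_apply, hCmat, hv, Matrix.mulVec_mulVec]
      rw [Matrix.mul_assoc ((↑P⁻¹ : Matrix (Fin n) (Fin n) ℂ) * D), hPP, Matrix.mul_one]
      rw [← Matrix.mulVec_mulVec, hDsingle, Matrix.mulVec_smul]
    -- the eigenspace of f for γ, and a common eigenvector
    have hγeig : Module.End.HasEigenvalue f γ :=
      Module.End.hasEigenvalue_of_hasEigenvector
        ⟨Module.End.mem_eigenspace_iff.mpr hfv, hvne⟩
    have hnt : Nontrivial (Module.End.eigenspace f γ) :=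
      Submodule.nontrivial_iff_ne_bot.mpr hγeig
    have hmaps := Module.End.mapsTo_genEigenspace_of_comm hfg γ 1
    set g' : Module.End ℂ (Module.End.eigenspace f γ) :=
      LinearMap.restrict g (fun x hx => hmaps hx) with hg'
    obtain ⟨β, hβ⟩ := Module.End.exists_eigenvalue g'
    obtain ⟨w, hw⟩ := hβ.exists_hasEigenvector
    set u : Fin n → ℂ := (w : Fin n → ℂ) with hu
    have hune : u ≠ 0 := by
      intro h0
      exact hw.2 (by simpa [hu, Submodule.coe_eq_zero] using h0)
    have hgu : g u = β • u := by
      have := congrArg (Subtype.val) hw.apply_eq_smul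
      simpa [hu, hg', LinearMap.restrict_apply] using this
    have hfu : f u = γ • u := Module.End.mem_eigenspace_iff.mp w.2
    have hfku : ∀ k : ℕ, (f ^ k) u = γ ^ k • u := by
      intro k
      induction k with
      | zero => simp
      | succ k ih =>
        rw [pow_succ', Module.End.mul_apply, ih, LinearMap.map_smul, hfu, smul_smul, ← pow_succ]
    have hβne : β ≠ 0 := by
      intro h0
      rw [h0, zero_smul] at hgu
      exact hune (hinj B u hgu)
    have hγne : γ ≠ 0 := by
      intro h0
      rw [h0, zero_smul] at hfu
      exact hune (hinj C u hfu)
    -- all γ^k * β are eigenvalues of g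
    have hev : ∀ k : ℕ, Module.End.HasEigenvalue g (γ ^ k * β) := by
      intro k
      have hkey : B * (A ^ k)⁻¹ = (A ^ k)⁻¹ * (C ^ k * B) := by
        rw [eq_inv_mul_iff_mul_eq, ← mul_assoc, mul_inv_eq_iff_eq_mul]
        exact hAB k
      have hmat := congrArg (fun (U : GL (Fin n) ℂ) => φ (U : Matrix (Fin n) (Fin n) ℂ)) hkey
      simp only [hcoe, _root_.map_mul] at hmat
      -- hmat : φ B * φ ↑(A^k)⁻¹ = φ ↑(A^k)⁻¹ * (φ ↑(C^k) * φ B)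
      set ρ : Module.End ℂ (Fin n → ℂ) := φ ((↑(A ^ k)⁻¹ : Matrix (Fin n) (Fin n) ℂ)) with hρ
      have hCk : φ ((↑(C ^ k) : Matrix (Fin n) (Fin n) ℂ)) = f ^ k := by
        rw [hf, ← map_pow, Units.val_pow_eq_pow_val]
      rw [hCk] at hmat
      have huk : g (ρ u) = (γ ^ k * β) • ρ u := by
        have h1 : (g * ρ) u = (ρ * (f ^ k * g)) u := by rw [hg, hmat]
        simp only [Module.End.mul_apply] at h1
        simp only [hgu, LinearMap.map_smul, hfku, smul_smul] at h1
        simpa [mul_comm] using h1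
      have hρune : ρ u ≠ 0 := fun h0 => hune (hinj ((A ^ k)⁻¹) u h0)
      exact Module.End.hasEigenvalue_of_hasEigenvector
        ⟨Module.End.mem_eigenspace_iff.mpr huk, hρune⟩
    -- eigenvalues form a finite set
    have hfin : Set.Finite (setOf (Module.End.HasEigenvalue g)) :=
      Module.End.finite_hasEigenvalue g
    have : ∃ k l : ℕ, k ≠ l ∧ γ ^ k * β = γ ^ l * β := by
      have : Finite (setOf (Module.End.HasEigenvalue g)) := hfin
      obtain ⟨k, l, hkl, heq⟩ := Finite.exists_ne_map_eq_of_infinite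
        (fun k : ℕ => (⟨γ ^ k * β, hev k⟩ : setOf (Module.End.HasEigenvalue g)))
      exact ⟨k, l, hkl, by simpa using congrArg Subtype.val heq⟩
    obtain ⟨k, l, hkl, heq⟩ := this
    have hpow : γ ^ k = γ ^ l := mul_right_cancel₀ hβne heq
    rcases hkl.lt_or_gt with h | h
    · refine ⟨l - k, by omega, ?_⟩
      rw [pow_sub₀ γ hγne h.le, ← hpow, mul_inv_cancel₀ (pow_ne_zero k hγne)]
    · refine ⟨k - l, by omega, ?_⟩
      rw [pow_sub₀ γ hγne h.le, hpow, mul_inv_cancel₀ (pow_ne_zero l hγne)]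
  -- conclude : D^N = 1 hence C^N = 1
  choose m hm1 hm2 using hroot
  refine ⟨∏ i, m i, Finset.prod_pos (fun i _ => hm1 i), ?_⟩
  have hDN : D ^ (∏ i, m i) = 1 := by
    conv_lhs => rw [← hP.diagonal_diag]
    rw [Matrix.diagonal_pow]
    have : (D.diag ^ (∏ i, m i)) = fun _ => (1 : ℂ) := by
      funext i
      obtain ⟨t, ht⟩ := Finset.dvd_prod_of_mem m (Finset.mem_univ i)
      simp only [Pi.pow_apply, Matrix.diag]
      rw [ht, pow_mul, hm2 i, one_pow]
    rw [this]
    exact Matrix.diagonal_one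
  have hEN : E ^ (∏ i, m i) = 1 := by
    ext1
    rw [hDdef] at hDN
    rw [Units.val_pow_eq_pow_val, Units.val_one]
    exact hDN
  have h1 : C = P⁻¹ * E * (P⁻¹)⁻¹ := by rw [hCE, inv_inv]
  rw [h1, conj_pow, hEN, mul_one, inv_inv, inv_mul_cancel]

open scoped commutatorElement

lemma aux_comm {H : Type*} [Group H] [Group.IsNilpotent H]
    (h : ¬ ∀ a b : H, a * b = b * a) :
    ∃ a b : H, ⁅a, b⁆ ≠ 1 ∧ ∀ g : H, Commute ⁅a, b⁆ g := by
  have hex := nilpotent_iff_lowerCentralSeries.mp ‹_›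
  classical
  set k := Nat.find hex with hk
  have hspec : lowerCentralSeries (⊤ : Subgroup H) k = ⊥ := Nat.find_spec hex
  have hk2 : 2 ≤ k := by
    by_contra hlt
    push_neg at hlt
    interval_cases k
    · apply h
      intro a b
      have : (a : H) ∈ (⊥ : Subgroup H) := hspec ▸ Subgroup.mem_top a
      have hb : (b : H) ∈ (⊥ : Subgroup H) := hspec ▸ Subgroup.mem_top b
      simp only [Subgroup.mem_bot] at this hb
      rw [this, hb]
    · apply h
      intro a b
      rw [← commutatorElement_eq_one_iff_mul_comm]
      have : ⁅a, b⁆ ∈ lowerCentralSeries (⊤ : Subgroup H) 1 :=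
        Subgroup.commutator_mem_commutator (Subgroup.mem_top a) (Subgroup.mem_top b)
      rw [hspec] at this
      simpa using this
  obtain ⟨j, hj⟩ : ∃ j, k = j + 2 := ⟨k - 2, by omega⟩
  rw [hj] at hspec
  have hne : lowerCentralSeries (⊤ : Subgroup H) (j + 1) ≠ ⊥ := Nat.find_min hex (by omega)
  have hstep : lowerCentralSeries (⊤ : Subgroup H) (j + 1) = ⁅lowerCentralSeries (⊤ : Subgroup H) j, ⊤⁆ := rfl
  have : ¬ (⁅lowerCentralSeries (⊤ : Subgroup H) j, (⊤ : Subgroup H)⁆ ≤ ⊥) := by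
    rw [← hstep]; simpa using hne
  rw [Subgroup.commutator_le] at this
  push_neg at this
  obtain ⟨a, ha, b, -, hab⟩ := this
  refine ⟨a, b, by simpa using hab, fun g => ?_⟩
  rw [← commutatorElement_eq_one_iff_commute]
  have h1 : ⁅a, b⁆ ∈ lowerCentralSeries (⊤ : Subgroup H) (j + 1) :=
    Subgroup.commutator_mem_commutator ha (Subgroup.mem_top b)
  have h2 : ⁅⁅a, b⁆, g⁆ ∈ lowerCentralSeries (⊤ : Subgroup H) (j + 2) :=
    Subgroup.commutator_mem_commutator h1 (Subgroup.mem_top g)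
  rw [hspec] at h2
  simpa using h2

/-- Every nilpotent, torsion-free, non-abelian subgroup of `GL_n(ℂ)` contains a
non-diagonalizable element. -/
theorem nilpotent_torsionFree_nonabelian_has_nondiagonalizable {n : ℕ}
    (G : Subgroup (GL (Fin n) ℂ)) [Group.IsNilpotent G]
    (htf : Monoid.IsTorsionFree G)
    (hna : ¬ ∀ a b : G, a * b = b * a) :
    ∃ g ∈ G, ¬ IsDiagonalizable (g : Matrix (Fin n) (Fin n) ℂ) := by
  by_contra hcon
  push_neg at hcon
  obtain ⟨a, b, hab1, hcen⟩ := aux_comm hna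
  set c : G := ⁅a, b⁆ with hc
  set A : GL (Fin n) ℂ := (a : GL (Fin n) ℂ) with hA
  set B : GL (Fin n) ℂ := (b : GL (Fin n) ℂ) with hB
  set C : GL (Fin n) ℂ := ⁅A, B⁆ with hC
  have hCc : ((c : GL (Fin n) ℂ)) = C := by
    rw [hc, hC, hA, hB]
    simp [commutatorElement_def]
  have hCA : Commute C A := by
    have h1 : c * a = a * c := (hcen a).eq
    have h2 := congrArg (fun x : G => (x : GL (Fin n) ℂ)) h1
    simp only [Subgroup.coe_mul, hCc] at h2
    exact h2
  have hCB : Commute C B := by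
    have h1 : c * b = b * c := (hcen b).eq
    have h2 := congrArg (fun x : G => (x : GL (Fin n) ℂ)) h1
    simp only [Subgroup.coe_mul, hCc] at h2
    exact h2
  have h1 : A * B = C * B * A := by
    rw [hC, commutatorElement_def]
    group
  have hAB : ∀ k : ℕ, A ^ k * B = C ^ k * B * A ^ k := by
    intro k
    induction k with
    | zero => simp
    | succ k ih =>
      calc A ^ (k + 1) * B = A ^ k * (A * B) := by rw [pow_succ, mul_assoc]
        _ = A ^ k * (C * B * A) := by rw [h1]
        _ = A ^ k * C * B * A := by rw [← mul_assoc, ← mul_assoc]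
        _ = C * A ^ k * B * A := by rw [(hCA.pow_right k).symm.eq]
        _ = C * (C ^ k * B * A ^ k) * A := by rw [mul_assoc C, ih]
        _ = C ^ (k + 1) * B * A ^ (k + 1) := by
            simp only [pow_succ, pow_succ']
            group
  have hCmem : C ∈ G := hCc ▸ SetLike.coe_mem c
  obtain ⟨N, hN0, hCN⟩ := key_pow_eq_one A B C hAB hCB (hcon C hCmem)
  have hcN : c ^ N = 1 := by
    have h2 : ((c ^ N : G) : GL (Fin n) ℂ) = 1 := by
      rw [SubgroupClass.coe_pow, hCc, hCN]
    exact_mod_cast h2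
  exact htf c hab1 (isOfFinOrder_iff_pow_eq_one.mpr ⟨N, hN0, hcN⟩)
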